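/- Suppose L ∈ ℝ^{n×n} satisfies the Lyapunov equation A^T L + L A + C^T Θ_{n_y} C = 0. Then for every s ∈ ℂ such that sI − A and −sI − A^T are invertible, Θ_{n_u} − B_u^T(−sI − A^T)⁻¹ C^T Θ_{n_y} C (sI − A)⁻¹ B_u = Θ_{n_u} − B_u^T(−sI − A^T)⁻¹ L B_u − B_u^T L (sI − A)⁻¹ B_u. -/

import Mathlib

open Matrix

/-- The block-diagonal matrix `diag(J, J, ..., J)` built from copies of
`J = [[0,1],[-1,0]]`, of size `m × m` (for `m` even). -/
def Theta (m : ℕ) : Matrix (Fin m) (Fin m) ℝ :=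
  Matrix.of fun i j =>
    if i.val % 2 = 0 ∧ j.val = i.val + 1 then (1 : ℝ)
    else if j.val % 2 = 0 ∧ i.val = j.val + 1 then (-1 : ℝ)
    else 0

theorem stmt_7 (n nu ny : ℕ) (hn : Even n) (hn0 : 0 < n)
    (hnu : Even nu) (hnu0 : 0 < nu) (hny : Even ny) (hny0 : 0 < ny)
    (A : Matrix (Fin n) (Fin n) ℝ) (Bu : Matrix (Fin n) (Fin nu) ℝ)
    (C : Matrix (Fin ny) (Fin n) ℝ)
    (L : Matrix (Fin n) (Fin n) ℝ)
    (hL : Aᵀ * L + L * A + Cᵀ * Theta ny * C = 0)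
    (s : ℂ)
    (Ac : Matrix (Fin n) (Fin n) ℂ) (hAc : Ac = A.map Complex.ofReal)
    (Buc : Matrix (Fin n) (Fin nu) ℂ) (hBuc : Buc = Bu.map Complex.ofReal)
    (Cc : Matrix (Fin ny) (Fin n) ℂ) (hCc : Cc = C.map Complex.ofReal)
    (Lc : Matrix (Fin n) (Fin n) ℂ) (hLc : Lc = L.map Complex.ofReal)
    (hs1 : IsUnit (s • (1 : Matrix (Fin n) (Fin n) ℂ) - Ac).det)
    (hs2 : IsUnit (-(s • (1 : Matrix (Fin n) (Fin n) ℂ)) - Acᵀ).det) :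
    (Theta nu).map Complex.ofReal -
        Bucᵀ * (-(s • 1) - Acᵀ)⁻¹ * Ccᵀ * (Theta ny).map Complex.ofReal * Cc *
          (s • 1 - Ac)⁻¹ * Buc =
      (Theta nu).map Complex.ofReal -
        Bucᵀ * (-(s • 1) - Acᵀ)⁻¹ * Lc * Buc -
        Bucᵀ * Lc * (s • 1 - Ac)⁻¹ * Buc := by
  set M : Matrix (Fin n) (Fin n) ℂ := s • (1 : Matrix (Fin n) (Fin n) ℂ) - Ac with hM
  set N : Matrix (Fin n) (Fin n) ℂ := -(s • (1 : Matrix (Fin n) (Fin n) ℂ)) - Acᵀ with hN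
  have hLc' : Acᵀ * Lc + Lc * Ac + Ccᵀ * (Theta ny).map Complex.ofReal * Cc = 0 := by
    have := congrArg (fun X : Matrix (Fin n) (Fin n) ℝ =>
      X.map (Complex.ofRealHom : ℝ →+* ℂ)) hL
    simp [Matrix.map_add, Matrix.map_mul, Matrix.map_zero, hAc, hCc, hLc,
      Matrix.transpose_map] at this
    rw [hAc, hCc, hLc]; exact this
  have key : Ccᵀ * (Theta ny).map Complex.ofReal * Cc = N * Lc + Lc * M := by
    have h : N * Lc + Lc * M = -(Acᵀ * Lc + Lc * Ac) := by
      rw [hM, hN]; noncomm_ring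
    rw [h, eq_neg_iff_add_eq_zero, add_comm, hLc']
  have hMinv : M * M⁻¹ = 1 := Matrix.mul_nonsing_inv M hs1
  have hNinv : N⁻¹ * N = 1 := Matrix.nonsing_inv_mul N hs2
  have mid : N⁻¹ * (Ccᵀ * (Theta ny).map Complex.ofReal * Cc) * M⁻¹
      = Lc * M⁻¹ + N⁻¹ * Lc := by
    rw [key, Matrix.mul_add, Matrix.add_mul, ← Matrix.mul_assoc N⁻¹ N Lc, hNinv,
      Matrix.one_mul, Matrix.mul_assoc N⁻¹ (Lc * M) M⁻¹, Matrix.mul_assoc Lc M M⁻¹,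
      hMinv, Matrix.mul_one]
  have expand : Bucᵀ * N⁻¹ * Ccᵀ * (Theta ny).map Complex.ofReal * Cc * M⁻¹ * Buc
      = Bucᵀ * Lc * M⁻¹ * Buc + Bucᵀ * N⁻¹ * Lc * Buc := by
    calc Bucᵀ * N⁻¹ * Ccᵀ * (Theta ny).map Complex.ofReal * Cc * M⁻¹ * Buc
        = Bucᵀ * (N⁻¹ * (Ccᵀ * (Theta ny).map Complex.ofReal * Cc) * M⁻¹) * Buc := by
          simp only [Matrix.mul_assoc]
      _ = Bucᵀ * (Lc * M⁻¹ + N⁻¹ * Lc) * Buc := by rw [mid]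
      _ = Bucᵀ * Lc * M⁻¹ * Buc + Bucᵀ * N⁻¹ * Lc * Buc := by
          rw [Matrix.mul_add, Matrix.add_mul]; simp only [Matrix.mul_assoc]
  rw [expand, sub_sub]
  congr 1
  abel
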